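/- Let G = G₀(u) ⋄ H(u) be a connected k-uniform hypergraph (k even) where H is odd-bipartite, and let x be a first eigenvector of G (an H-eigenvector of Q(G) for its least H-eigenvalue). Then ∏_{v∈e} x_v ≤ 0 for every edge e ∈ E(H). -/

import Mathlib

set_option linter.unusedSectionVars false
set_option linter.unusedVariables false
set_option maxHeartbeats 1000000

open Finset

structure UHG (V : Type) [DecidableEq V] [Fintype V] (k : ℕ) where
  edges : Finset (Finset V)
  uniform : ∀ e ∈ edges, e.card = k

namespace UHG

variable {V : Type} [DecidableEq V] [Fintype V] {k : ℕ}

/-- The vertices of the hypergraph: all vertices covered by some edge. -/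
def verts (G : UHG V k) : Finset V := G.edges.biUnion id

/-- The set of edges containing a given vertex. -/
def incEdges (G : UHG V k) (v : V) : Finset (Finset V) :=
  G.edges.filter fun e => v ∈ e

/-- The degree of a vertex. -/
def deg (G : UHG V k) (v : V) : ℕ := (G.incEdges v).card

/-- Two vertices are adjacent if some edge contains both. -/
def Adj (G : UHG V k) (u v : V) : Prop := ∃ e ∈ G.edges, u ∈ e ∧ v ∈ e

/-- A hypergraph is connected if any two of its vertices are joined by a walk. -/
def Connected (G : UHG V k) : Prop :=
  G.verts.Nonempty ∧ ∀ u ∈ G.verts, ∀ v ∈ G.verts, Relation.ReflTransGen G.Adj u v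

/-- A hypergraph is odd-bipartite if there is a set `U` of vertices such that
every edge meets `U` in an odd number of vertices (the bipartition is `{U, V \ U}`). -/
def OddBipartite (G : UHG V k) : Prop :=
  ∃ U : Finset V, ∀ e ∈ G.edges, Odd (e ∩ U).card

/-- The signless Laplacian form `Q(G) x^k = ∑_{e ∈ E} (∑_{v∈e} x_v^k + k ∏_{v∈e} x_v)`. -/
def Qform (G : UHG V k) (x : V → ℝ) : ℝ :=
  ∑ e ∈ G.edges, ((∑ v ∈ e, x v ^ k) + (k : ℝ) * ∏ v ∈ e, x v)

/-- The H-eigenvector equation for the signless Laplacian tensor: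
`(λ - d(v)) x_v^{k-1} = ∑_{e ∋ v} ∏_{w ∈ e \ {v}} x_w` for every vertex `v`. -/
def eigenEq (G : UHG V k) (lam : ℝ) (x : V → ℝ) : Prop :=
  ∀ v : V, (lam - (G.deg v : ℝ)) * x v ^ (k - 1) =
    ∑ e ∈ G.incEdges v, ∏ w ∈ e.erase v, x w

/-- The least H-eigenvalue of the signless Laplacian tensor. -/
noncomputable def lamMin (G : UHG V k) : ℝ :=
  sInf {lam : ℝ | ∃ x : V → ℝ, x ≠ 0 ∧ G.eigenEq lam x}

/-- A first eigenvector: an H-eigenvector associated with the least H-eigenvalue. -/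
def IsFirstEigenvector (G : UHG V k) (x : V → ℝ) : Prop :=
  x ≠ 0 ∧ G.eigenEq G.lamMin x

/-- `G` is the coalescence `G₀(u) ⋄ H(u)`: its edges are the disjoint union of the
edges of `G₀` and `H`, which share only the vertex `u`. -/
def IsCoalescence (G G₀ H : UHG V k) (u : V) : Prop :=
  G.edges = G₀.edges ∪ H.edges ∧ Disjoint G₀.edges H.edges ∧
  G₀.verts ∩ H.verts ⊆ {u} ∧ u ∈ G₀.verts ∧ u ∈ H.verts

end UHG

namespace StmtAux

open UHG

variable {V : Type} [DecidableEq V] [Fintype V] {k : ℕ}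

lemma swap_sum (G : UHG V k) (F : V → Finset V → ℝ) :
    ∑ v : V, ∑ e ∈ G.incEdges v, F v e = ∑ e ∈ G.edges, ∑ v ∈ e, F v e := by
  have h : ∀ v : V, ∑ e ∈ G.incEdges v, F v e
      = ∑ e ∈ G.edges, if v ∈ e then F v e else 0 := by
    intro v; rw [UHG.incEdges, Finset.sum_filter]
  simp_rw [h]
  rw [Finset.sum_comm]
  refine Finset.sum_congr rfl fun e _ => ?_
  rw [Finset.sum_ite_mem, Finset.univ_inter]

lemma eigen_eval (hk0 : 0 < k) (G : UHG V k) (lam : ℝ) (z : V → ℝ)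
    (hz : G.eigenEq lam z) : lam * (∑ v : V, z v ^ k) = G.Qform z := by
  have hpow : ∀ a : ℝ, a ^ (k - 1) * a = a ^ k := by
    intro a; rw [← pow_succ, Nat.sub_add_cancel hk0]
  have key : ∑ v : V, ((lam - (G.deg v : ℝ)) * z v ^ (k - 1)) * z v
      = ∑ v : V, (∑ e ∈ G.incEdges v, ∏ w ∈ e.erase v, z w) * z v :=
    Finset.sum_congr rfl fun v _ => by rw [hz v]
  have hL : ∑ v : V, ((lam - (G.deg v : ℝ)) * z v ^ (k - 1)) * z v
      = lam * (∑ v : V, z v ^ k) - ∑ v : V, (G.deg v : ℝ) * z v ^ k := by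
    simp_rw [sub_mul, mul_assoc, hpow]
    rw [Finset.sum_sub_distrib, ← Finset.mul_sum]
  have hR : ∑ v : V, (∑ e ∈ G.incEdges v, ∏ w ∈ e.erase v, z w) * z v
      = ∑ e ∈ G.edges, (k : ℝ) * ∏ w ∈ e, z w := by
    have h1 : ∀ v : V, (∑ e ∈ G.incEdges v, ∏ w ∈ e.erase v, z w) * z v
        = ∑ e ∈ G.incEdges v, ∏ w ∈ e, z w := by
      intro v
      rw [Finset.sum_mul]
      refine Finset.sum_congr rfl fun e he => ?_
      exact Finset.prod_erase_mul _ _ ((Finset.mem_filter.mp he).2)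
    simp_rw [h1]
    rw [swap_sum G (fun _ e => ∏ w ∈ e, z w)]
    refine Finset.sum_congr rfl fun e he => ?_
    rw [Finset.sum_const, nsmul_eq_mul, G.uniform e he]
  have hD : ∑ v : V, (G.deg v : ℝ) * z v ^ k
      = ∑ e ∈ G.edges, ∑ v ∈ e, z v ^ k := by
    have h1 : ∀ v : V, (G.deg v : ℝ) * z v ^ k = ∑ e ∈ G.incEdges v, z v ^ k := by
      intro v; rw [Finset.sum_const, nsmul_eq_mul, UHG.deg]
    simp_rw [h1]
    exact swap_sum G (fun v _ => z v ^ k)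
  rw [hL, hR, hD] at key
  rw [UHG.Qform, Finset.sum_add_distrib]
  linarith [key]

lemma prod_abs_le (hk0 : 0 < k) (hk : Even k) (z : V → ℝ) (e : Finset V)
    (hcard : e.card = k) : ∏ v ∈ e, |z v| ≤ ∑ v : V, z v ^ k := by
  have hne : e.Nonempty := Finset.card_pos.mp (hcard ▸ hk0)
  obtain ⟨w, hw, hMw⟩ := Finset.exists_mem_eq_sup' hne fun v => |z v|
  calc ∏ v ∈ e, |z v| ≤ ∏ _v ∈ e, e.sup' hne fun v => |z v| :=
        Finset.prod_le_prod (fun v _ => abs_nonneg _)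
          (fun v hv => Finset.le_sup' (fun v => |z v|) hv)
    _ = (e.sup' hne fun v => |z v|) ^ k := by rw [Finset.prod_const, hcard]
    _ = z w ^ k := by rw [hMw, Even.pow_abs hk]
    _ ≤ ∑ v : V, z v ^ k :=
        Finset.single_le_sum (fun v _ => hk.pow_nonneg (z v)) (Finset.mem_univ w)

lemma sum_pow_pos' (hk : Even k) {z : V → ℝ} (hz : z ≠ 0) :
    0 < ∑ v : V, z v ^ k := by
  obtain ⟨v, hv⟩ := Function.ne_iff.mp hz
  exact Finset.sum_pos' (fun w _ => hk.pow_nonneg (z w))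
    ⟨v, Finset.mem_univ v, hk.pow_pos hv⟩

lemma lam_lower (hk : Even k) (hk0 : 0 < k) (G : UHG V k) (lam : ℝ) (z : V → ℝ)
    (hz0 : z ≠ 0) (hz : G.eigenEq lam z) : -((k : ℝ) * G.edges.card) ≤ lam := by
  set T := ∑ v : V, z v ^ k with hT
  have hT0 : 0 < T := sum_pow_pos' hk hz0
  have hQ : lam * T = G.Qform z := eigen_eval hk0 G lam z hz
  have hbound : -((k : ℝ) * G.edges.card) * T ≤ G.Qform z := by
    rw [UHG.Qform]
    have hterm : ∀ e ∈ G.edges,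
        -((k : ℝ) * T) ≤ (∑ v ∈ e, z v ^ k) + (k : ℝ) * ∏ v ∈ e, z v := by
      intro e he
      have h1 : 0 ≤ ∑ v ∈ e, z v ^ k := Finset.sum_nonneg fun v _ => hk.pow_nonneg (z v)
      have h2 : |∏ v ∈ e, z v| ≤ T := by
        rw [abs_prod]; exact prod_abs_le hk0 hk z e (G.uniform e he)
      have h3 : -T ≤ ∏ v ∈ e, z v := le_trans (neg_le_neg h2) (neg_abs_le _)
      have hkp : (0 : ℝ) < k := Nat.cast_pos.mpr hk0
      nlinarith
    calc -((k : ℝ) * G.edges.card) * T = ∑ _e ∈ G.edges, -((k : ℝ) * T) := by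
          rw [Finset.sum_const, nsmul_eq_mul]; ring
      _ ≤ _ := Finset.sum_le_sum hterm
  rw [← hQ] at hbound
  exact le_of_mul_le_mul_right (by linarith) hT0

noncomputable def proj (v : V) : ((V → ℝ) →L[ℝ] ℝ) :=
  ContinuousLinearMap.proj v

lemma hasStrict_coord_pow (a : V → ℝ) (v : V) (k : ℕ) :
    HasStrictFDerivAt (fun z : V → ℝ => z v ^ k)
      (((k : ℝ) * a v ^ (k - 1)) • proj v) a := by
  have h := HasStrictFDerivAt.finset_prod (u := Finset.range k)
    (g := fun _ (z : V → ℝ) => z v) (g' := fun _ => proj v) (x := a)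
    (fun i _ => (proj v).hasStrictFDerivAt)
  have hfun : (fun z : V → ℝ => ∏ _i ∈ Finset.range k, z v)
      = fun z : V → ℝ => z v ^ k := by
    funext z; rw [Finset.prod_const, Finset.card_range]
  have hder : (∑ i ∈ Finset.range k, (∏ _j ∈ (Finset.range k).erase i, a v) • proj v)
      = ((k : ℝ) * a v ^ (k - 1)) • proj v := by
    have h1 : ∀ i ∈ Finset.range k,
        (∏ _j ∈ (Finset.range k).erase i, a v) • proj v
          = (a v ^ (k - 1)) • proj v := by
      intro i hi
      rw [Finset.prod_const, Finset.card_erase_of_mem hi, Finset.card_range]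
    rw [Finset.sum_congr rfl h1, Finset.sum_const, Finset.card_range,
      ← Nat.cast_smul_eq_nsmul ℝ, smul_smul]
  rw [← hfun, ← hder]
  exact h

noncomputable def normDer (k : ℕ) (a : V → ℝ) : ((V → ℝ) →L[ℝ] ℝ) :=
  ∑ v : V, ((k : ℝ) * a v ^ (k - 1)) • proj v

lemma hasStrict_norm (a : V → ℝ) :
    HasStrictFDerivAt (fun z : V → ℝ => ∑ v : V, z v ^ k) (normDer k a) a :=
  HasStrictFDerivAt.fun_sum fun v _ => hasStrict_coord_pow a v k

noncomputable def edgeDer (k : ℕ) (e : Finset V) (a : V → ℝ) : ((V → ℝ) →L[ℝ] ℝ) :=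
  (∑ v ∈ e, ((k : ℝ) * a v ^ (k - 1)) • proj v)
    + (k : ℝ) • ∑ v ∈ e, (∏ w ∈ e.erase v, a w) • proj v

lemma hasStrict_edge (e : Finset V) (a : V → ℝ) :
    HasStrictFDerivAt
      (fun z : V → ℝ => (∑ v ∈ e, z v ^ k) + (k : ℝ) * ∏ v ∈ e, z v)
      (edgeDer k e a) a := by
  refine HasStrictFDerivAt.add
    (HasStrictFDerivAt.fun_sum fun v _ => hasStrict_coord_pow a v k) ?_
  have h := HasStrictFDerivAt.finset_prod (u := e)
    (g := fun v (z : V → ℝ) => z v) (g' := fun v => proj v) (x := a)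
    (fun v _ => (proj v).hasStrictFDerivAt)
  exact h.const_mul (k : ℝ)

lemma eval_smul_proj (s : Finset V) (c : V → ℝ) (w : V) :
    (∑ v ∈ s, c v • proj v) (Pi.single w (1 : ℝ)) = if w ∈ s then c w else 0 := by
  rw [ContinuousLinearMap.sum_apply]
  simp only [ContinuousLinearMap.smul_apply, proj, ContinuousLinearMap.proj_apply,
    Pi.single_apply, smul_eq_mul, mul_ite, mul_one, mul_zero]
  exact Finset.sum_ite_eq' s w c

lemma eval_smul_proj_self (s : Finset V) (c : V → ℝ) (a : V → ℝ) :
    (∑ v ∈ s, c v • proj v) a = ∑ v ∈ s, c v * a v := by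
  rw [ContinuousLinearMap.sum_apply]
  simp only [ContinuousLinearMap.smul_apply, proj, ContinuousLinearMap.proj_apply,
    smul_eq_mul]

lemma exists_eigen_le (hk : Even k) (hk0 : 0 < k) (G : UHG V k)
    (y : V → ℝ) (hy : y ≠ 0) :
    ∃ (lam₀ : ℝ) (z : V → ℝ), z ≠ 0 ∧ G.eigenEq lam₀ z ∧
      lam₀ * (∑ v : V, y v ^ k) ≤ G.Qform y := by
  classical
  set T := ∑ v : V, y v ^ k with hTdef
  have hT0 : 0 < T := sum_pow_pos' hk hy
  set sphere : Set (V → ℝ) := {z | (∑ v : V, z v ^ k) = T} with hsph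
  have hymem : y ∈ sphere := rfl
  have hgc : Continuous (fun z : V → ℝ => ∑ v : V, z v ^ k) :=
    continuous_finset_sum _ fun v _ => (continuous_apply v).pow k
  have hQc : Continuous G.Qform := by
    refine continuous_finset_sum _ fun e _ => ?_
    exact (continuous_finset_sum _ fun v _ => (continuous_apply v).pow k).add
      (continuous_const.mul (continuous_finset_prod _ fun v _ => continuous_apply v))
  have hclosed : IsClosed sphere := isClosed_eq hgc continuous_const
  have hsub : sphere ⊆ Set.univ.pi fun _ : V => Set.Icc (-(T + 1)) (T + 1) := by
    intro z hz
    rw [Set.mem_univ_pi]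
    intro v
    rw [Set.mem_Icc, ← abs_le]
    by_contra hc
    push_neg at hc
    have h1 : (1 : ℝ) ≤ |z v| := by linarith
    have h2 : |z v| ≤ |z v| ^ k := le_self_pow₀ h1 hk0.ne'
    have h3 : z v ^ k ≤ T := by
      rw [← hz]
      exact Finset.single_le_sum (fun w _ => hk.pow_nonneg (z w)) (Finset.mem_univ v)
    rw [Even.pow_abs hk] at h2
    linarith
  have hcomp : IsCompact sphere :=
    IsCompact.of_isClosed_subset (isCompact_univ_pi fun _ => isCompact_Icc) hclosed hsub
  obtain ⟨z₀, hz₀mem, hz₀min⟩ := hcomp.exists_isMinOn ⟨y, hymem⟩ hQc.continuousOn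
  have hz₀T : (∑ v : V, z₀ v ^ k) = T := hz₀mem
  have hz₀ne : z₀ ≠ 0 := by
    intro h0
    rw [h0] at hz₀T
    simp [zero_pow hk0.ne'] at hz₀T
    linarith
  have hQ' : HasStrictFDerivAt G.Qform (∑ e ∈ G.edges, edgeDer k e z₀) z₀ := by
    have hh : G.Qform = fun z : V → ℝ =>
        ∑ e ∈ G.edges, ((∑ v ∈ e, z v ^ k) + (k : ℝ) * ∏ v ∈ e, z v) := rfl
    rw [hh]
    exact HasStrictFDerivAt.fun_sum fun e _ => hasStrict_edge e z₀
  have hextr : IsLocalExtrOn G.Qform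
      {z : V → ℝ | (∑ v : V, z v ^ k) = (∑ v : V, z₀ v ^ k)} z₀ := by
    have hset : {z : V → ℝ | (∑ v : V, z v ^ k) = (∑ v : V, z₀ v ^ k)} = sphere := by
      rw [hz₀T]
    rw [hset]
    exact Or.inl hz₀min.localize
  obtain ⟨a, b, hab, hsum⟩ :=
    hextr.exists_multipliers_of_hasStrictFDerivAt_1d (hasStrict_norm z₀) hQ'
  have happ : ∀ w : V → ℝ,
      a * (normDer k z₀ w) + b * ((∑ e ∈ G.edges, edgeDer k e z₀) w) = 0 := by
    intro w
    have := DFunLike.congr_fun hsum w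
    simpa [ContinuousLinearMap.add_apply, ContinuousLinearMap.smul_apply,
      smul_eq_mul] using this
  have hk' : (k : ℝ) ≠ 0 := Nat.cast_ne_zero.mpr hk0.ne'
  have hpow : ∀ c : ℝ, c ^ (k - 1) * c = c ^ k := by
    intro c; rw [← pow_succ, Nat.sub_add_cancel hk0]
  have hb : b ≠ 0 := by
    intro hb0
    have ha : a ≠ 0 := by
      intro ha0
      exact hab (by rw [ha0, hb0]; rfl)
    have h1 := happ z₀
    rw [hb0, zero_mul, add_zero] at h1
    have h2 : normDer k z₀ z₀ = (k : ℝ) * T := by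
      rw [normDer, eval_smul_proj_self]
      simp_rw [mul_assoc, hpow]
      rw [← Finset.mul_sum, hz₀T]
    rw [h2] at h1
    exact (mul_ne_zero ha (mul_ne_zero hk' hT0.ne')) h1
  have heig : G.eigenEq (-a / b) z₀ := by
    intro v
    have h1 := happ (Pi.single v 1)
    have hnd : normDer k z₀ (Pi.single v 1) = (k : ℝ) * z₀ v ^ (k - 1) := by
      rw [normDer, eval_smul_proj]
      simp
    have hqd : (∑ e ∈ G.edges, edgeDer k e z₀) (Pi.single v 1)
        = (G.deg v : ℝ) * ((k : ℝ) * z₀ v ^ (k - 1))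
          + (k : ℝ) * ∑ e ∈ G.incEdges v, ∏ w ∈ e.erase v, z₀ w := by
      rw [ContinuousLinearMap.sum_apply]
      have hterm : ∀ e ∈ G.edges, edgeDer k e z₀ (Pi.single v 1)
          = (if v ∈ e then (k : ℝ) * z₀ v ^ (k - 1) else 0)
            + (k : ℝ) * (if v ∈ e then ∏ w ∈ e.erase v, z₀ w else 0) := by
        intro e he
        rw [edgeDer, ContinuousLinearMap.add_apply, ContinuousLinearMap.smul_apply,
          eval_smul_proj, eval_smul_proj, smul_eq_mul]
      rw [Finset.sum_congr rfl hterm, Finset.sum_add_distrib]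
      congr 1
      · rw [← Finset.sum_filter, Finset.sum_const, nsmul_eq_mul]
        rfl
      · rw [← Finset.mul_sum, ← Finset.sum_filter]
        rfl
    rw [hnd, hqd] at h1
    have key : (-a / b - (G.deg v : ℝ)) * z₀ v ^ (k - 1)
        - (∑ e ∈ G.incEdges v, ∏ w ∈ e.erase v, z₀ w)
        = (-(1) / (b * (k : ℝ))) *
          (a * ((k : ℝ) * z₀ v ^ (k - 1))
            + b * ((G.deg v : ℝ) * ((k : ℝ) * z₀ v ^ (k - 1))
              + (k : ℝ) * ∑ e ∈ G.incEdges v, ∏ w ∈ e.erase v, z₀ w)) := by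
      field_simp
      ring
    rw [h1, mul_zero] at key
    linarith [key]
  refine ⟨-a / b, z₀, hz₀ne, heig, ?_⟩
  have hEq : (-a / b) * T = G.Qform z₀ := by
    have h := eigen_eval hk0 G (-a / b) z₀ heig
    rw [hz₀T] at h
    exact h
  calc (-a / b) * T = G.Qform z₀ := hEq
    _ ≤ G.Qform y := isMinOn_iff.mp hz₀min y hymem

end StmtAux

/-- Let `G = G₀(u) ⋄ H(u)` be a connected `k`-uniform hypergraph (`k` even)
with `H` odd-bipartite, and let `x` be a first eigenvector of `G`. Then
`∏_{v ∈ e} x_v ≤ 0` for every edge `e ∈ E(H)`. -/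
theorem stmt7 {V : Type} [DecidableEq V] [Fintype V] {k : ℕ}
    (hk : Even k) (hk0 : 0 < k) (G G₀ H : UHG V k) (u : V)
    (hcoal : UHG.IsCoalescence G G₀ H u) (hH : H.OddBipartite) (hconn : G.Connected)
    (x : V → ℝ) (hx : G.IsFirstEigenvector x) :
    ∀ e ∈ H.edges, (∏ v ∈ e, x v) ≤ 0 := by
  classical
  obtain ⟨hEdges, hDisj, hInter, huG₀, huH⟩ := hcoal
  obtain ⟨xne, hxeig⟩ := hx
  obtain ⟨U, hU⟩ := hH
  intro e₀ he₀
  by_contra hpos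
  push_neg at hpos
  set T := ∑ v : V, x v ^ k with hTdef
  have hT0 : 0 < T := StmtAux.sum_pow_pos' hk xne
  have hHsub : ∀ e ∈ H.edges, e ⊆ H.verts := fun e he v hv =>
    Finset.mem_biUnion.mpr ⟨e, he, hv⟩
  have hG₀sub : ∀ e ∈ G₀.edges, e ⊆ G₀.verts := fun e he v hv =>
    Finset.mem_biUnion.mpr ⟨e, he, hv⟩
  set A := U ∩ H.verts with hA
  set B := H.verts \ U with hB
  have hAodd : ∀ e ∈ H.edges, Odd (e ∩ A).card := by
    intro e he
    have heq : e ∩ A = e ∩ U := by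
      ext v
      simp only [hA, Finset.mem_inter]
      constructor
      · rintro ⟨h1, h2, _⟩; exact ⟨h1, h2⟩
      · rintro ⟨h1, h2⟩; exact ⟨h1, h2, hHsub e he h1⟩
    rw [heq]; exact hU e he
  have hBodd : ∀ e ∈ H.edges, Odd (e ∩ B).card := by
    intro e he
    have heq : e ∩ B = e \ U := by
      ext v
      simp only [hB, Finset.mem_inter, Finset.mem_sdiff]
      constructor
      · rintro ⟨h1, _, h3⟩; exact ⟨h1, h3⟩
      · rintro ⟨h1, h2⟩; exact ⟨h1, hHsub e he h1, h2⟩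
    have hcards := Finset.card_inter_add_card_sdiff e U
    have hcard := H.uniform e he
    have hodd := hU e he
    have hkk := hk
    rw [heq, Nat.odd_iff]
    rw [Nat.odd_iff] at hodd
    rw [Nat.even_iff] at hkk
    omega
  set W : Finset V := if u ∈ A then B else A with hW
  set W' : Finset V := if u ∈ A then A else B with hW'
  have huAB : u ∈ A ∨ u ∈ B := by
    by_cases h : u ∈ U
    · exact Or.inl (Finset.mem_inter.mpr ⟨h, huH⟩)
    · exact Or.inr (Finset.mem_sdiff.mpr ⟨huH, h⟩)
  have huW : u ∉ W := by
    rw [hW]; split_ifs with h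
    · intro hc; exact (Finset.mem_sdiff.mp hc).2 (Finset.mem_inter.mp h).1
    · exact h
  have huW' : u ∈ W' := by
    rw [hW']; split_ifs with h
    · exact h
    · rcases huAB with h1 | h2
      · exact absurd h1 h
      · exact h2
  have hWodd : ∀ e ∈ H.edges, Odd (e ∩ W).card := by
    intro e he; rw [hW]; split_ifs with h
    exacts [hBodd e he, hAodd e he]
  have hW'odd : ∀ e ∈ H.edges, Odd (e ∩ W').card := by
    intro e he; rw [hW']; split_ifs with h
    exacts [hAodd e he, hBodd e he]
  have hWsub : W ⊆ H.verts := by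
    rw [hW]; split_ifs
    exacts [Finset.sdiff_subset, Finset.inter_subset_right]
  have hW'sub : W' ⊆ H.verts := by
    rw [hW']; split_ifs
    exacts [Finset.inter_subset_right, Finset.sdiff_subset]
  set S : Finset V := if 0 ≤ x u then W else W'.erase u with hS
  have huS : u ∉ S := by
    rw [hS]; split_ifs
    exacts [huW, Finset.notMem_erase u W']
  have hSsub : S ⊆ H.verts := by
    rw [hS]; split_ifs
    exacts [hWsub, (Finset.erase_subset u W').trans hW'sub]
  have hprodS : ∀ e ∈ H.edges,
      (-1 : ℝ) ^ (e ∩ S).card * (if u ∈ e then (if 0 ≤ x u then (1 : ℝ) else -1) else 1)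
        = -1 := by
    intro e he
    by_cases hxu : 0 ≤ x u
    · rw [hS, if_pos hxu] at *
      rw [Odd.neg_one_pow (hWodd e he)]
      split_ifs <;> norm_num
    · rw [hS, if_neg hxu] at *
      by_cases hue : u ∈ e
      · have hmem : u ∈ e ∩ W' := Finset.mem_inter.mpr ⟨hue, huW'⟩
        have hcard : (e ∩ W'.erase u).card = (e ∩ W').card - 1 := by
          rw [Finset.inter_erase, Finset.card_erase_of_mem hmem]
        have heven : Even (e ∩ W'.erase u).card := by
          rw [hcard]
          exact Nat.Odd.sub_odd (hW'odd e he) odd_one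
        rw [Even.neg_one_pow heven, if_pos hue, if_neg hxu]
        norm_num
      · have heq : e ∩ W'.erase u = e ∩ W' := by
          rw [Finset.inter_erase, Finset.erase_eq_of_notMem]
          intro hc; exact hue (Finset.mem_inter.mp hc).1
        rw [heq, Odd.neg_one_pow (hW'odd e he), if_neg hue]
        norm_num
  set y : V → ℝ := fun v =>
    if v ∈ S then -|x v| else if v ∈ H.verts.erase u then |x v| else x v with hy
  set c : V → ℝ := fun v =>
    if v ∈ S then -1 else if v = u then (if 0 ≤ x u then 1 else -1) else 1 with hc
  have hyk : ∀ v : V, y v ^ k = x v ^ k := by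
    intro v
    rw [hy]
    dsimp only
    split_ifs with h1 h2
    · rw [Even.neg_pow hk, Even.pow_abs hk]
    · rw [Even.pow_abs hk]
    · rfl
  have hyG₀ : ∀ e ∈ G₀.edges, ∀ v ∈ e, y v = x v := by
    intro e he v hv
    have hvG₀ : v ∈ G₀.verts := hG₀sub e he hv
    have hvnH : v ∈ H.verts → v = u := fun hvH =>
      Finset.mem_singleton.mp (hInter (Finset.mem_inter.mpr ⟨hvG₀, hvH⟩))
    have hnS : v ∉ S := by
      intro hc
      have hvu := hvnH (hSsub hc)
      exact huS (hvu ▸ hc)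
    have hnE : v ∉ H.verts.erase u := by
      intro hc
      obtain ⟨hne, hvH⟩ := Finset.mem_erase.mp hc
      exact hne (hvnH hvH)
    rw [hy]
    dsimp only
    rw [if_neg hnS, if_neg hnE]
  have hcy : ∀ e ∈ H.edges, ∀ v ∈ e, y v = c v * |x v| := by
    intro e he v hv
    rw [hy, hc]
    dsimp only
    by_cases h1 : v ∈ S
    · rw [if_pos h1, if_pos h1]; ring
    · rw [if_neg h1, if_neg h1]
      by_cases h2 : v = u
      · subst h2
        rw [if_neg (Finset.notMem_erase v H.verts), if_pos rfl]
        by_cases h3 : 0 ≤ x v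
        · rw [if_pos h3, one_mul, abs_of_nonneg h3]
        · rw [if_neg h3, abs_of_neg (lt_of_not_ge h3)]; ring
      · have hvH : v ∈ H.verts.erase u := Finset.mem_erase.mpr ⟨h2, hHsub e he hv⟩
        rw [if_pos hvH, if_neg h2, one_mul]
  have hprodc : ∀ e ∈ H.edges, ∏ v ∈ e, c v = -1 := by
    intro e he
    have hsplit := Finset.prod_filter_mul_prod_filter_not e (fun v => v ∈ S) c
    have h1 : ∏ v ∈ e.filter (fun v => v ∈ S), c v = (-1 : ℝ) ^ (e ∩ S).card := by
      rw [Finset.prod_congr rfl (fun v hv => ?_), Finset.prod_const,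
        Finset.filter_mem_eq_inter]
      rw [hc]
      dsimp only
      rw [if_pos (Finset.mem_filter.mp hv).2]
    have h2 : ∏ v ∈ e.filter (fun v => ¬ v ∈ S), c v
        = (if u ∈ e then (if 0 ≤ x u then (1 : ℝ) else -1) else 1) := by
      have hcg : ∀ v ∈ e.filter (fun v => ¬ v ∈ S), c v
          = if v = u then (if 0 ≤ x u then (1 : ℝ) else -1) else 1 := by
        intro v hv
        rw [hc]
        dsimp only
        rw [if_neg (Finset.mem_filter.mp hv).2]
      rw [Finset.prod_congr rfl hcg, Finset.prod_ite_eq']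
      have hmemiff : (u ∈ e.filter (fun v => ¬ v ∈ S)) ↔ (u ∈ e) := by
        simp [Finset.mem_filter, huS]
      exact if_congr hmemiff rfl rfl
    rw [← hsplit, h1, h2]
    exact hprodS e he
  have hyH : ∀ e ∈ H.edges, ∏ v ∈ e, y v = -∏ v ∈ e, |x v| := by
    intro e he
    rw [Finset.prod_congr rfl (hcy e he), Finset.prod_mul_distrib, hprodc e he]
    ring
  have hle : ∀ e ∈ H.edges, ∏ v ∈ e, y v ≤ ∏ v ∈ e, x v := by
    intro e he
    rw [hyH e he, ← abs_prod]
    exact neg_abs_le _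
  have hlt : ∏ v ∈ e₀, y v < ∏ v ∈ e₀, x v := by
    rw [hyH e₀ he₀, ← abs_prod, abs_of_pos hpos]
    linarith
  have hkR : (0 : ℝ) < k := Nat.cast_pos.mpr hk0
  have hQlt : G.Qform y < G.Qform x := by
    rw [UHG.Qform, UHG.Qform, hEdges, Finset.sum_union hDisj, Finset.sum_union hDisj]
    have hG₀eq : ∑ e ∈ G₀.edges, ((∑ v ∈ e, y v ^ k) + (k : ℝ) * ∏ v ∈ e, y v)
        = ∑ e ∈ G₀.edges, ((∑ v ∈ e, x v ^ k) + (k : ℝ) * ∏ v ∈ e, x v) := by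
      refine Finset.sum_congr rfl fun e he => ?_
      congr 1
      · exact Finset.sum_congr rfl fun v _ => hyk v
      · rw [Finset.prod_congr rfl (hyG₀ e he)]
    have hHlt : ∑ e ∈ H.edges, ((∑ v ∈ e, y v ^ k) + (k : ℝ) * ∏ v ∈ e, y v)
        < ∑ e ∈ H.edges, ((∑ v ∈ e, x v ^ k) + (k : ℝ) * ∏ v ∈ e, x v) := by
      refine Finset.sum_lt_sum (fun e he => ?_) ⟨e₀, he₀, ?_⟩
      · have hs : ∑ v ∈ e, y v ^ k = ∑ v ∈ e, x v ^ k :=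
          Finset.sum_congr rfl fun v _ => hyk v
        rw [hs]
        exact add_le_add_right (mul_le_mul_of_nonneg_left (hle e he) hkR.le) _
      · have hs : ∑ v ∈ e₀, y v ^ k = ∑ v ∈ e₀, x v ^ k :=
          Finset.sum_congr rfl fun v _ => hyk v
        rw [hs]
        exact add_lt_add_right (mul_lt_mul_of_pos_left hlt hkR) _
    linarith
  have hyT : ∑ v : V, y v ^ k = T := by
    rw [hTdef]
    exact Finset.sum_congr rfl fun v _ => hyk v
  have hyne : y ≠ 0 := by
    intro h0
    rw [h0] at hyT
    simp [zero_pow hk0.ne'] at hyT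
    linarith
  have hQx : G.lamMin * T = G.Qform x := StmtAux.eigen_eval hk0 G _ x hxeig
  obtain ⟨lam₀, z₀, hz₀ne, heig₀, hlam₀le⟩ := StmtAux.exists_eigen_le hk hk0 G y hyne
  have h1 : lam₀ * T ≤ G.Qform y := by
    rw [← hyT]; exact hlam₀le
  have h2 : lam₀ * T < G.lamMin * T := by
    rw [hQx]; exact lt_of_le_of_lt h1 hQlt
  have h3 : lam₀ < G.lamMin := lt_of_mul_lt_mul_right h2 hT0.le
  have h4 : G.lamMin ≤ lam₀ := by
    apply csInf_le
    · refine ⟨-((k : ℝ) * G.edges.card), ?_⟩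
      rintro lam ⟨z, hz0, hz⟩
      exact StmtAux.lam_lower hk hk0 G lam z hz0 hz
    · exact ⟨z₀, hz₀ne, heig₀⟩
  linarith
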